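/- Let ψ = (ψ₊, ψ₋) ∈ ℂ² with ψ₊, ψ₋ ≠ 0 and ‖ψ‖ = 1, and let s_{j,±} be the diagonal entries of E_ψ(S_j | S₃) for the Pauli spin operators S_j = σ_j/2 (so s_{1,±} + i s_{2,±}(±1) satisfies 2(s_{1,+} + i s_{2,+}) = ψ₋/ψ₊ and 2(s_{1,−} − i s_{2,−}) = ψ₊/ψ₋). Setting 𝕊₊ = (s_{1,+}, s_{2,+}, 1/2) and 𝕊₋ = (s_{1,−}, s_{2,−}, −1/2), one has 𝕊₊ · 𝕊₋ = 0, (𝕊₊ × 𝕊₋)₃ = 0, and 4‖𝕊₊‖² = |ψ₊|^{−2}, 4‖𝕊₋‖² = |ψ₋|^{−2}. -/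

import Mathlib

open Complex

/-- for a normalized spinor `ψ = (ψ₊, ψ₋) ∈ ℂ²` with both
components nonzero, the conditional expectations `s_{j,±}` of the spin operators
`S_j = σ_j/2` given `S₃` (explicitly `s_{1,+} = (1/2)Re(ψ₋conj(ψ₊))/|ψ₊|²` etc.)
assembled into `𝕊₊ = (s_{1,+}, s_{2,+}, 1/2)` and `𝕊₋ = (s_{1,−}, s_{2,−}, −1/2)`
satisfy `𝕊₊·𝕊₋ = 0`, `(𝕊₊×𝕊₋)₃ = 0`, `4‖𝕊₊‖² = |ψ₊|⁻²` and `4‖𝕊₋‖² = |ψ₋|⁻²`. -/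
theorem stmt_18 (ψp ψm : ℂ) (hψp : ψp ≠ 0) (hψm : ψm ≠ 0)
    (hnorm : ‖ψp‖ ^ 2 + ‖ψm‖ ^ 2 = 1)
    (s1p s2p s1m s2m : ℝ)
    (h1p : s1p = (1 / 2) * (ψm * (starRingEnd ℂ) ψp).re / ‖ψp‖ ^ 2)
    (h2p : s2p = (1 / 2) * (ψm * (starRingEnd ℂ) ψp).im / ‖ψp‖ ^ 2)
    (h1m : s1m = (1 / 2) * (ψp * (starRingEnd ℂ) ψm).re / ‖ψm‖ ^ 2)
    (h2m : s2m = -(1 / 2) * (ψp * (starRingEnd ℂ) ψm).im / ‖ψm‖ ^ 2) :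
    s1p * s1m + s2p * s2m + (1 / 2) * (-(1 / 2)) = 0 ∧
    s1p * s2m - s2p * s1m = 0 ∧
    4 * (s1p ^ 2 + s2p ^ 2 + (1 / 2) ^ 2) = (‖ψp‖ ^ 2)⁻¹ ∧
    4 * (s1m ^ 2 + s2m ^ 2 + (1 / 2) ^ 2) = (‖ψm‖ ^ 2)⁻¹ := by
  have ha : ‖ψp‖ ^ 2 = ψp.re ^ 2 + ψp.im ^ 2 := by
    rw [Complex.sq_norm, Complex.normSq_apply]; ring
  have hb : ‖ψm‖ ^ 2 = ψm.re ^ 2 + ψm.im ^ 2 := by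
    rw [Complex.sq_norm, Complex.normSq_apply]; ring
  have ha0 : ψp.re ^ 2 + ψp.im ^ 2 ≠ 0 := by
    rw [← ha]
    exact pow_ne_zero 2 (norm_ne_zero_iff.mpr hψp)
  have hb0 : ψm.re ^ 2 + ψm.im ^ 2 ≠ 0 := by
    rw [← hb]
    exact pow_ne_zero 2 (norm_ne_zero_iff.mpr hψm)
  have hn : (ψp.re ^ 2 + ψp.im ^ 2) + (ψm.re ^ 2 + ψm.im ^ 2) = 1 := by
    rw [← ha, ← hb]; exact hnorm
  subst h1p h2p h1m h2m
  rw [ha, hb]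
  simp only [Complex.mul_re, Complex.mul_im, Complex.conj_re, Complex.conj_im]
  refine ⟨?_, ?_, ?_, ?_⟩ <;> field_simp <;> nlinarith [hn, sq_nonneg ψp.re, sq_nonneg ψm.re]
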